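/- Let T: X → X and S: Y → Y be homeomorphisms of compact metric spaces, π: X → Y a continuous surjection with π∘T = S∘π, and ν an ergodic S-invariant Borel probability measure on Y such that |π⁻¹(y)| = d for ν-a.e. y, where d ∈ ℕ is finite. Then there exists a degree joining over ν: an ergodic T×⋯×T-invariant Borel probability measure λ on X^d giving full measure to the set of tuples (x₁,…,x_d) with π(x₁) = ⋯ = π(x_d) and x₁,…,x_d pairwise distinct, and satisfying (π∘p_i)λ = ν for each coordinate projection p_i. -/

import Mathlib

open MeasureTheory Set Filter
open scoped ENNReal

namespace DegreeJoining

variable {X : Type*} [MetricSpace X] [CompactSpace X] [Nonempty X]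

/-- dense sequence in X -/
noncomputable def q : ℕ → X := TopologicalSpace.denseSeq X

noncomputable def fseq (n : ℕ) (x : X) : ℝ := dist x (q n)

lemma fseq_cont (n : ℕ) : Continuous (fseq (X := X) n) :=
  Continuous.dist continuous_id continuous_const

/-- argmin of f over K -/
def argmin (f : X → ℝ) (K : Set X) : Set X := {x ∈ K | ∀ x' ∈ K, f x ≤ f x'}

lemma argmin_subset (f : X → ℝ) (K : Set X) : argmin f K ⊆ K := fun _ h => h.1

lemma argmin_isCompact {f : X → ℝ} (hf : Continuous f) {K : Set X} (hK : IsCompact K) :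
    IsCompact (argmin f K) := by
  have : IsClosed (argmin f K) := by
    have h1 : argmin f K = K ∩ ⋂ x' ∈ K, {x | f x ≤ f x'} := by
      ext x; simp [argmin]
    rw [h1]
    exact hK.isClosed.inter (isClosed_biInter fun x' _ =>
      isClosed_le hf continuous_const)
  exact this.isCompact

lemma argmin_nonempty {f : X → ℝ} (hf : Continuous f) {K : Set X} (hK : IsCompact K)
    (hne : K.Nonempty) : (argmin f K).Nonempty := by
  obtain ⟨x, hxK, hx⟩ := hK.exists_isMinOn hne hf.continuousOn
  exact ⟨x, hxK, fun x' hx' => hx hx'⟩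

/-- iterated argmin sets -/
noncomputable def Kseq (K : Set X) : ℕ → Set X
  | 0 => K
  | n + 1 => argmin (fseq n) (Kseq K n)

lemma Kseq_isCompact {K : Set X} (hK : IsCompact K) (n : ℕ) : IsCompact (Kseq K n) := by
  induction n with
  | zero => exact hK
  | succ n ih => exact argmin_isCompact (fseq_cont n) ih

lemma Kseq_nonempty {K : Set X} (hK : IsCompact K) (hne : K.Nonempty) (n : ℕ) :
    (Kseq K n).Nonempty := by
  induction n with
  | zero => exact hne
  | succ n ih => exact argmin_nonempty (fseq_cont n) (Kseq_isCompact hK n) ih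

lemma Kseq_antitone {K : Set X} : Antitone (Kseq K) :=
  antitone_nat_of_succ_le fun n => argmin_subset _ _

lemma Kseq_subset {K : Set X} (n : ℕ) : Kseq K n ⊆ K := Kseq_antitone (Nat.zero_le n)

lemma iInter_Kseq_nonempty {K : Set X} (hK : IsCompact K) (hne : K.Nonempty) :
    (⋂ n, Kseq K n).Nonempty :=
  IsCompact.nonempty_iInter_of_directed_nonempty_isCompact_isClosed _
    (Kseq_antitone.directed_ge) (Kseq_nonempty hK hne) (Kseq_isCompact hK)
    (fun n => (Kseq_isCompact hK n).isClosed)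

lemma iInter_Kseq_subsingleton {K : Set X} : (⋂ n, Kseq K n).Subsingleton := by
  intro x hx y hy
  have h : ∀ n, fseq n x = fseq n y := by
    intro n
    have hx1 : x ∈ Kseq K (n+1) := mem_iInter.1 hx (n+1)
    have hy1 : y ∈ Kseq K (n+1) := mem_iInter.1 hy (n+1)
    exact le_antisymm (hx1.2 y hy1.1) (hy1.2 x hx1.1)
  -- dist x (q n) = dist y (q n) for all n, q dense ⇒ x = y
  by_contra hxy
  have hd : 0 < dist x y := dist_pos.2 hxy
  obtain ⟨n, hn⟩ : ∃ n, dist x (q n) < dist x y / 2 := by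
    have hdr := TopologicalSpace.denseRange_denseSeq X
    obtain ⟨n, hn⟩ := hdr.exists_dist_lt x (by positivity : (0:ℝ) < dist x y / 2)
    exact ⟨n, by simpa [q, dist_comm] using hn⟩
  have h2 : dist y (q n) < dist x y / 2 := by
    have := h n
    simp only [fseq] at this
    linarith [this]
  have : dist x y < dist x y := by
    calc dist x y ≤ dist x (q n) + dist y (q n) := dist_triangle_right x y (q n)
    _ < dist x y / 2 + dist x y / 2 := by exact add_lt_add hn h2
    _ = dist x y := by ring
  exact lt_irrefl _ this

open Classical in
/-- canonical point of a compact set -/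
noncomputable def lexmin (K : Set X) : X :=
  if h : (⋂ n, Kseq K n).Nonempty then h.choose else Classical.arbitrary X

lemma lexmin_mem_iInter {K : Set X} (hK : IsCompact K) (hne : K.Nonempty) :
    lexmin K ∈ ⋂ n, Kseq K n := by
  classical
  rw [lexmin]
  rw [dif_pos (iInter_Kseq_nonempty hK hne)]
  exact (iInter_Kseq_nonempty hK hne).choose_spec

lemma lexmin_mem {K : Set X} (hK : IsCompact K) (hne : K.Nonempty) : lexmin K ∈ K :=
  Kseq_subset 0 (mem_iInter.1 (lexmin_mem_iInter hK hne) 0)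

/-- key characterization for measurability: membership of `lexmin K` in a closed set -/
lemma lexmin_mem_closed_iff {K : Set X} (hK : IsCompact K) (hne : K.Nonempty)
    {C : Set X} (hC : IsClosed C) :
    lexmin K ∈ C ↔ ∀ n, (Kseq K n ∩ C).Nonempty := by
  constructor
  · intro h n
    exact ⟨lexmin K, mem_iInter.1 (lexmin_mem_iInter hK hne) n, h⟩
  · intro h
    have hne' : ((⋂ n, Kseq K n) ∩ C).Nonempty := by
      have hanti : Antitone (fun n => Kseq K n ∩ C) := fun a b hab =>
        inter_subset_inter_left C (Kseq_antitone hab)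
      have := IsCompact.nonempty_iInter_of_directed_nonempty_isCompact_isClosed
        (fun n => Kseq K n ∩ C)
        hanti.directed_ge
        h (fun n => ((Kseq_isCompact hK n).inter_right hC))
        (fun n => ((Kseq_isCompact hK n).isClosed.inter hC))
      rwa [← iInter_inter] at this
    obtain ⟨x, hx, hxC⟩ := hne'
    rwa [iInter_Kseq_subsingleton hx (lexmin_mem_iInter hK hne)] at hxC

/-- the key recursion identity for hitting sets -/
lemma argmin_inter_nonempty_iff {f : X → ℝ} (hf : Continuous f) {K : Set X}
    (hK : IsCompact K) {C : Set X} (hC : IsClosed C) :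
    (argmin f K ∩ C).Nonempty ↔
      K.Nonempty ∧ ∀ s : ℚ, (K ∩ {x | f x ≤ s}).Nonempty → (K ∩ C ∩ {x | f x ≤ s}).Nonempty := by
  constructor
  · rintro ⟨x, hxa, hxC⟩
    refine ⟨⟨x, hxa.1⟩, fun s ⟨x', hx'K, hx's⟩ => ⟨x, ⟨hxa.1, hxC⟩, le_trans (hxa.2 x' hx'K) hx's⟩⟩
  · rintro ⟨hne, h⟩
    obtain ⟨x₀, hx₀K, hx₀⟩ := hK.exists_isMinOn hne hf.continuousOn
    -- m := f x₀ is the min.  Consider D_s := K ∩ C ∩ {f ≤ s} for rational s ≥ f x₀.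
    set Q := {s : ℚ | f x₀ ≤ (s:ℝ)} with hQ
    have hQne : Q.Nonempty := by
      obtain ⟨s, hs⟩ := exists_rat_gt (f x₀)
      exact ⟨s, le_of_lt hs⟩
    have hDne : ∀ s ∈ Q, (K ∩ C ∩ {x | f x ≤ s}).Nonempty := by
      intro s hs
      exact h s ⟨x₀, hx₀K, hs⟩
    -- directed family of nonempty compacts
    have key : (⋂ s ∈ Q, (K ∩ C ∩ {x | f x ≤ (s:ℝ)})).Nonempty := by
      have hQne' : Nonempty Q := hQne.to_subtype
      have := IsCompact.nonempty_iInter_of_directed_nonempty_isCompact_isClosed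
        (fun s : Q => K ∩ C ∩ {x | f x ≤ (s:ℝ)})
        ?_ (fun s => hDne s s.2)
        (fun s => (hK.inter_right hC).inter_right (isClosed_le hf continuous_const))
        (fun s => ((hK.isClosed.inter hC).inter (isClosed_le hf continuous_const)))
      · obtain ⟨x, hx⟩ := this
        refine ⟨x, ?_⟩
        simp only [mem_iInter]
        intro s hs
        exact mem_iInter.1 hx ⟨s, hs⟩
      · intro s t
        rcases le_total (((s:ℚ)):ℝ) ((t:ℚ):ℝ) with hst | hst
        · exact ⟨s, le_refl _, fun x hx => ⟨hx.1, le_trans hx.2 hst⟩⟩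
        · exact ⟨t, fun x hx => ⟨hx.1, le_trans hx.2 hst⟩, le_refl _⟩
    obtain ⟨x, hx⟩ := key
    simp only [mem_iInter] at hx
    have hxK : x ∈ K := by
      obtain ⟨s, hs⟩ := hQne
      exact (hx s hs).1.1
    have hxC : x ∈ C := by
      obtain ⟨s, hs⟩ := hQne
      exact (hx s hs).1.2
    have hxmin : f x ≤ f x₀ := by
      by_contra hlt
      push_neg at hlt
      obtain ⟨s, hs1, hs2⟩ := exists_rat_btwn hlt
      exact absurd ((hx s (le_of_lt hs1)).2 : f x ≤ (s:ℝ)) (not_le.2 hs2)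
    exact ⟨x, ⟨hxK, fun x' hx' => le_trans hxmin (hx₀ hx')⟩, hxC⟩


section Selector

variable {X Y : Type*} [MetricSpace X] [CompactSpace X] [Nonempty X]
  [MetricSpace Y] [CompactSpace Y]
  [MeasurableSpace X] [BorelSpace X] [MeasurableSpace Y] [BorelSpace Y]
  {π : X → Y} (hπc : Continuous π)
  {k : ℕ} {w : Y → (Fin k → X)} (hw : Measurable w)
  (C : Set ((Fin k → X) × X))

/-- the constrained fiber -/
def Kfam (π : X → Y) (w : Y → (Fin k → X)) (C : Set ((Fin k → X) × X)) (y : Y) : Set X :=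
  {x | π x = y ∧ (w y, x) ∈ C}

include hπc in
lemma Kfam_isCompact (hC : IsClosed C) (y : Y) : IsCompact (Kfam π w C y) := by
  have h1 : Kfam π w C y = (π ⁻¹' {y}) ∩ {x | (w y, x) ∈ C} := rfl
  rw [h1]
  exact ((isClosed_singleton.preimage hπc).inter
    (hC.preimage (Continuous.prodMk_right (w y)))).isCompact

include hπc hw in
lemma hit_measurable (hC : IsClosed C) :
    MeasurableSet {y | ∃ x, π x = y ∧ (w y, x) ∈ C} := by
  set H : Set ((Fin k → X) × Y) := (fun p : (Fin k → X) × X => (p.1, π p.2)) '' C with hH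
  have hHclosed : IsClosed H :=
    ((IsProperMap.prodMap isProperMap_id hπc.isProperMap).isClosedMap) C hC
  have heq : {y | ∃ x, π x = y ∧ (w y, x) ∈ C} = (fun y => (w y, y)) ⁻¹' H := by
    ext y
    simp only [mem_setOf_eq, mem_preimage, hH, mem_image, Prod.ext_iff]
    constructor
    · rintro ⟨x, hxy, hxC⟩
      exact ⟨(w y, x), hxC, rfl, hxy⟩
    · rintro ⟨⟨a, x⟩, hC', ha, hxy⟩
      dsimp only at ha hxy
      exact ⟨x, hxy, ha ▸ hC'⟩
  rw [heq]
  exact hHclosed.measurableSet.preimage (hw.prodMk measurable_id)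

include hπc hw in
lemma Kseq_hit_measurable (hC : IsClosed C) (n : ℕ) :
    ∀ C₀ : Set X, IsClosed C₀ →
      MeasurableSet {y | (Kseq (Kfam π w C y) n ∩ C₀).Nonempty} := by
  induction n with
  | zero =>
    intro C₀ hC₀
    have heq : {y | (Kseq (Kfam π w C y) 0 ∩ C₀).Nonempty}
        = {y | ∃ x, π x = y ∧ (w y, x) ∈ C ∩ (univ ×ˢ C₀)} := by
      ext y
      simp only [Kseq, mem_setOf_eq, Set.Nonempty, mem_inter_iff, Kfam, mem_prod, mem_univ,
        true_and, mem_setOf_eq]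
      tauto
    rw [heq]
    exact hit_measurable hπc hw _ (hC.inter (isClosed_univ.prod hC₀))
  | succ n ih =>
    intro C₀ hC₀
    have heq : {y | (Kseq (Kfam π w C y) (n+1) ∩ C₀).Nonempty}
        = {y | (Kseq (Kfam π w C y) n ∩ univ).Nonempty} ∩
          ⋂ s : ℚ, ({y | (Kseq (Kfam π w C y) n ∩ {x | fseq n x ≤ (s:ℝ)}).Nonempty}ᶜ ∪
            {y | (Kseq (Kfam π w C y) n ∩ (C₀ ∩ {x | fseq n x ≤ (s:ℝ)})).Nonempty}) := by
      ext y
      have hcpt : IsCompact (Kseq (Kfam π w C y) n) :=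
        Kseq_isCompact (Kfam_isCompact hπc C hC y) n
      have := argmin_inter_nonempty_iff (fseq_cont n) hcpt hC₀
      simp only [mem_inter_iff, mem_iInter, mem_union, mem_compl_iff, mem_setOf_eq,
        inter_univ]
      constructor
      · intro h
        have h2 := (this.1 h)
        refine ⟨h2.1, fun s => ?_⟩
        by_cases hs : (Kseq (Kfam π w C y) n ∩ {x | fseq n x ≤ (s:ℝ)}).Nonempty
        · right
          obtain ⟨x, hx1, hx2⟩ := h2.2 s hs
          exact ⟨x, hx1.1, hx1.2, hx2⟩
        · left; exact hs
      · rintro ⟨h1, h2⟩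
        refine this.2 ⟨h1, fun s hs => ?_⟩
        rcases h2 s with h | h
        · exact absurd hs h
        · obtain ⟨x, hx1, hx2, hx3⟩ := h
          exact ⟨x, ⟨hx1, hx2⟩, hx3⟩
    rw [heq]
    refine (ih univ isClosed_univ).inter (MeasurableSet.iInter fun s => ?_)
    exact ((ih _ (isClosed_le (fseq_cont n) continuous_const)).compl).union
      (ih _ (hC₀.inter (isClosed_le (fseq_cont n) continuous_const)))

include hπc hw in
lemma measurable_lexmin_Kfam (hC : IsClosed C) :
    Measurable (fun y => lexmin (Kfam π w C y)) := by
  classical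
  apply measurable_of_isClosed
  intro C₀ hC₀
  have hKe : ∀ y, ¬ (Kfam π w C y).Nonempty → lexmin (Kfam π w C y) = Classical.arbitrary X := by
    intro y hy
    have hKem : Kfam π w C y = ∅ := not_nonempty_iff_eq_empty.1 hy
    have hseq : ∀ n, Kseq (Kfam π w C y) n = (∅ : Set X) := by
      intro n
      induction n with
      | zero => exact hKem
      | succ n ih => simp [Kseq, ih, argmin]
    have : (⋂ n, Kseq (Kfam π w C y) n) = (∅ : Set X) := by
      simp only [hseq, iInter_const]
    rw [lexmin, dif_neg]
    rw [this]
    simp [Set.Nonempty]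
  have heq : (fun y => lexmin (Kfam π w C y)) ⁻¹' C₀ =
      ({y | (Kfam π w C y).Nonempty} ∩
        ⋂ n, {y | (Kseq (Kfam π w C y) n ∩ C₀).Nonempty}) ∪
      ({y | (Kfam π w C y).Nonempty}ᶜ ∩
        (if Classical.arbitrary X ∈ C₀ then univ else ∅)) := by
    ext y
    by_cases hy : (Kfam π w C y).Nonempty
    · have hcpt := Kfam_isCompact (w := w) hπc C hC y
      simp only [mem_preimage, mem_union, mem_inter_iff, mem_setOf_eq, inter_univ, mem_iInter,
        hy, not_true_eq_false, mem_compl_iff, mem_setOf_eq, false_and, or_false, true_and]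
      exact lexmin_mem_closed_iff hcpt hy hC₀
    · simp only [mem_preimage, hKe y hy, mem_union, mem_inter_iff, mem_setOf_eq, inter_univ,
        hy, false_and, false_or, mem_compl_iff, not_false_eq_true, true_and]
      by_cases harb : Classical.arbitrary X ∈ C₀ <;> simp [harb]
  have h0 : MeasurableSet {y | (Kfam π w C y).Nonempty} := by
    have := Kseq_hit_measurable hπc hw C hC 0 univ isClosed_univ
    simpa [Kseq, inter_univ] using this
  rw [heq]
  refine MeasurableSet.union ?_ ?_
  · exact h0.inter (MeasurableSet.iInter fun n => Kseq_hit_measurable hπc hw C hC n C₀ hC₀)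
  · refine MeasurableSet.inter h0.compl ?_
    split <;> simp

end Selector


/-- helper: finitely many positive reals admit `1/(n+1)` lower bound -/
lemma exists_one_div_le {ι : Type*} (s : Finset ι) (f : ι → ℝ) (hf : ∀ i ∈ s, 0 < f i) :
    ∃ n : ℕ, ∀ i ∈ s, 1 / ((n:ℝ) + 1) ≤ f i := by
  classical
  induction s using Finset.induction with
  | empty => exact ⟨0, by simp⟩
  | @insert a s' ha' ih =>
    obtain ⟨n, hn⟩ := ih (fun i hi => hf i (Finset.mem_insert_of_mem hi))
    have haa : 0 < f a := hf a (Finset.mem_insert_self a s')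
    obtain ⟨m, hm⟩ := exists_nat_one_div_lt haa
    refine ⟨max n m, fun i hi => ?_⟩
    rcases Finset.mem_insert.1 hi with rfl | hi
    · refine le_trans ?_ (le_of_lt hm)
      apply one_div_le_one_div_of_le
      · positivity
      · have : (m:ℝ) ≤ (max n m : ℕ) := by exact_mod_cast Nat.le_max_right n m
        linarith
    · refine le_trans ?_ (hn i hi)
      apply one_div_le_one_div_of_le
      · positivity
      · have : (n:ℝ) ≤ (max n m : ℕ) := by exact_mod_cast Nat.le_max_left n m
        linarith

section Enum

variable {X Y : Type*} [MetricSpace X] [CompactSpace X] [Nonempty X]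
  [MetricSpace Y] [CompactSpace Y]
  [MeasurableSpace X] [BorelSpace X] [MeasurableSpace Y] [BorelSpace Y]
  {π : X → Y} (hπc : Continuous π)
  (ν : Measure Y) [IsProbabilityMeasure ν]
  {d : ℕ}

include hπc in
lemma exists_enum (hfib : ∀ᵐ y ∂ν, (π ⁻¹' {y}).encard = d) :
    ∃ F : Y → (Fin d → X), Measurable F ∧
      ∀ᵐ y ∂ν, (∀ i, π (F y i) = y) ∧ Function.Injective (F y) ∧
        Set.range (F y) = π ⁻¹' {y} := by
  -- first build partial enumerations by induction
  have key : ∀ k : ℕ, k ≤ d → ∃ F : Y → (Fin k → X), Measurable F ∧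
      ∀ᵐ y ∂ν, (∀ i, π (F y i) = y) ∧ Function.Injective (F y) := by
    intro k hk
    induction k with
    | zero =>
      refine ⟨fun _ i => i.elim0, measurable_pi_lambda _ (fun i => i.elim0), ?_⟩
      filter_upwards with y
      exact ⟨fun i => i.elim0, fun i => i.elim0⟩
    | succ k ih =>
      obtain ⟨F, hFm, hFae⟩ := ih (le_of_lt (Nat.lt_of_succ_le hk))
      -- the closed constraint sets
      set C : ℕ → Set ((Fin k → X) × X) :=
        fun n => {p | ∀ i, 1 / ((n:ℝ) + 1) ≤ dist (p.1 i) p.2} with hC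
      have hCclosed : ∀ n, IsClosed (C n) := by
        intro n
        have : C n = ⋂ i, {p : (Fin k → X) × X | 1 / ((n:ℝ) + 1) ≤ dist (p.1 i) p.2} := by
          ext p; simp [hC]
        rw [this]
        exact isClosed_iInter fun i => isClosed_le continuous_const
          (Continuous.dist ((continuous_apply i).comp continuous_fst) continuous_snd)
      set g : ℕ → Y → X := fun n y => lexmin (Kfam π F (C n) y) with hg
      have hgm : ∀ n, Measurable (g n) := fun n =>
        measurable_lexmin_Kfam hπc hFm (C n) (hCclosed n)
      -- stabilization of the constrained fibers, for good y
      have hstab_all : ∀ y : Y, (π ⁻¹' {y}).encard = (d:ℕ∞) →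
          ((∀ i, π (F y i) = y) ∧ Function.Injective (F y)) →
          (π ⁻¹' {y} \ Set.range (F y)).Nonempty ∧
          ∃ N, ∀ n ≥ N, Kfam π F (C n) y = π ⁻¹' {y} \ Set.range (F y) := by
        intro y hy hF
        have hfibfin : (π ⁻¹' {y}).Finite := Set.finite_of_encard_eq_coe hy
        set R := π ⁻¹' {y} \ Set.range (F y) with hR
        have hRfin : R.Finite := hfibfin.diff
        have hRne : R.Nonempty := by
          rw [Set.diff_nonempty]
          intro hsub
          have h1 : (π ⁻¹' {y}).encard ≤ (Set.range (F y)).encard :=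
            Set.encard_le_encard hsub
          have h2 : (Set.range (F y)).encard = (k:ℕ∞) := by
            rw [← Set.image_univ, hF.2.encard_image, Set.encard_univ]
            simp
          rw [hy, h2] at h1
          have := Nat.lt_of_succ_le hk
          exact absurd (by exact_mod_cast h1 : d ≤ k) (Nat.not_le.2 this)
        refine ⟨hRne, ?_⟩
        have hx_thresh : ∀ x ∈ hRfin.toFinset, ∃ m : ℕ, ∀ i,
            1 / ((m:ℝ) + 1) ≤ dist (F y i) x := by
          intro x hx
          rw [Set.Finite.mem_toFinset] at hx
          obtain ⟨m₀, hm₀⟩ := exists_one_div_le Finset.univ (fun i => dist (F y i) x)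
            (by
              intro i _
              rw [dist_pos]
              intro hcontra
              exact hx.2 ⟨i, hcontra⟩)
          exact ⟨m₀, fun i => hm₀ i (Finset.mem_univ i)⟩
        choose m hm using hx_thresh
        refine ⟨(hRfin.toFinset.attach.sup fun x => m x.1 x.2), fun n hn => ?_⟩
        ext x
        constructor
        · rintro ⟨hx1, hx2⟩
          refine ⟨hx1, fun ⟨i, hi⟩ => ?_⟩
          have := hx2 i
          dsimp only at this
          rw [hi] at this
          simp only [dist_self] at this
          have hpos : (0:ℝ) < 1 / ((n:ℝ) + 1) := by positivity
          linarith
        · intro hx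
          have hxF : x ∈ hRfin.toFinset := (Set.Finite.mem_toFinset _).2 hx
          refine ⟨hx.1, fun i => ?_⟩
          refine le_trans ?_ (hm x hxF i)
          apply one_div_le_one_div_of_le
          · positivity
          · have h0 : m x hxF ≤ hRfin.toFinset.attach.sup (fun z => m z.1 z.2) :=
              Finset.le_sup (f := fun z => m z.1 z.2) (Finset.mem_attach _ ⟨x, hxF⟩)
            have h1 : m x hxF ≤ n := le_trans h0 hn
            have h2 : (m x hxF : ℝ) ≤ (n:ℝ) := by exact_mod_cast h1
            linarith
      -- a.e. convergence
      have haeconv : ∀ᵐ y ∂ν, ∃ l : X, Tendsto (fun n => g n y) atTop (nhds l) := by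
        filter_upwards [hfib, hFae] with y hy hF
        obtain ⟨hRne, N, hN⟩ := hstab_all y hy hF
        refine ⟨lexmin (π ⁻¹' {y} \ Set.range (F y)), ?_⟩
        apply tendsto_atTop_of_eventually_const (i₀ := N)
        intro n hn
        simp only [hg]
        rw [hN n hn]
      obtain ⟨glim, hglimm, hglim⟩ :=
        measurable_limit_of_tendsto_metrizable_ae (fun n => (hgm n).aemeasurable) haeconv
      -- the new enumeration
      refine ⟨fun y => Fin.snoc (F y) (glim y), ?_, ?_⟩
      · apply measurable_pi_lambda
        intro i
        refine Fin.lastCases ?_ ?_ i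
        · simp only [Fin.snoc_last]
          exact hglimm
        · intro j
          simp only [Fin.snoc_castSucc]
          exact hFm.eval
      · filter_upwards [hfib, hFae, hglim] with y hy hF hconv
        obtain ⟨hRne, N, hN⟩ := hstab_all y hy hF
        set R := π ⁻¹' {y} \ Set.range (F y) with hR
        have hRfin : R.Finite := (Set.finite_of_encard_eq_coe hy).diff
        -- glim y = lexmin R ∈ R
        have hconst : Tendsto (fun n => g n y) atTop (nhds (lexmin R)) := by
          apply tendsto_atTop_of_eventually_const (i₀ := N)
          intro n hn
          simp only [hg]
          rw [hN n hn]
        have hglimval : glim y = lexmin R := tendsto_nhds_unique hconv hconst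
        have hmem : glim y ∈ R := by
          rw [hglimval]
          exact lexmin_mem hRfin.isCompact hRne
        constructor
        · intro i
          refine Fin.lastCases ?_ ?_ i
          · simp only [Fin.snoc_last]
            exact hmem.1
          · intro j
            simp only [Fin.snoc_castSucc]
            exact hF.1 j
        · intro a b hab
          have hnr : glim y ∉ Set.range (F y) := hmem.2
          rcases Fin.eq_castSucc_or_eq_last a with ⟨a', rfl⟩ | rfl <;>
            rcases Fin.eq_castSucc_or_eq_last b with ⟨b', rfl⟩ | rfl
          · simp only [Fin.snoc_castSucc] at hab
            rw [hF.2 hab]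
          · simp only [Fin.snoc_castSucc, Fin.snoc_last] at hab
            exact absurd ⟨a', hab⟩ hnr
          · simp only [Fin.snoc_castSucc, Fin.snoc_last] at hab
            exact absurd ⟨b', hab.symm⟩ hnr
          · rfl
  obtain ⟨F, hFm, hFae⟩ := key d le_rfl
  refine ⟨F, hFm, ?_⟩
  filter_upwards [hfib, hFae] with y hy hF
  refine ⟨hF.1, hF.2, ?_⟩
  have hsub : Set.range (F y) ⊆ π ⁻¹' {y} := by
    rintro _ ⟨i, rfl⟩
    exact hF.1 i
  have hrenc : (Set.range (F y)).encard = (d:ℕ∞) := by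
    rw [← Set.image_univ, hF.2.encard_image, Set.encard_univ]
    simp
  exact Set.Finite.eq_of_subset_of_encard_le' (Set.finite_of_encard_eq_coe hy) hsub
    (le_of_eq (hy.trans hrenc.symm))

end Enum

/-- measurability of equalizers in metric spaces -/
lemma measurableSet_eq_fun'' {α E : Type*} [MeasurableSpace α] [TopologicalSpace E] [T2Space E]
    [SecondCountableTopology E] [MeasurableSpace E] [OpensMeasurableSpace E] {f g : α → E}
    (hf : Measurable f) (hg : Measurable g) : MeasurableSet {x | f x = g x} := by
  have h : {x | f x = g x} = (fun x => (f x, g x)) ⁻¹' {p : E × E | p.1 = p.2} := rfl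
  rw [h]
  exact (isClosed_eq continuous_fst continuous_snd).measurableSet.preimage (hf.prodMk hg)

/-- counting measure is invariant under left multiplication -/
lemma count_preimage_mul_left {G : Type*} [Group G] [MeasurableSpace G]
    [MeasurableSingletonClass G] (g : G) (B : Set G) :
    Measure.count ((fun τ => g * τ) ⁻¹' B) = Measure.count B := by
  classical
  have hpre : ((fun τ => g * τ) ⁻¹' B) = (fun b => g⁻¹ * b) '' B := by
    ext τ
    simp only [mem_preimage, mem_image]
    constructor
    · intro h
      exact ⟨g * τ, h, by group⟩
    · rintro ⟨b, hb, rfl⟩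
      simpa [mul_assoc] using hb
  by_cases hB : B.Finite
  · rw [hpre, Measure.count_apply_finite _ (hB.image _), Measure.count_apply_finite _ hB]
    norm_cast
    rw [Set.Finite.toFinset_image]
    exact Finset.card_image_of_injective _ (mul_right_injective g⁻¹)
  · rw [hpre, Measure.count_apply_infinite (Set.Infinite.image
      ((mul_right_injective g⁻¹).injOn) hB),
      Measure.count_apply_infinite hB]

end DegreeJoining

open DegreeJoining

/-- For a factor map between topological dynamical systems on compact
metric spaces and an ergodic measure `ν` on `Y` whose a.e. fiber has finite cardinality
`d`, there is a degree joining over `ν`: an ergodic `d`-fold separating relative joining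
over `ν`. -/
theorem exists_degree_joining_general
    {X Y : Type*} [MetricSpace X] [CompactSpace X] [MetricSpace Y] [CompactSpace Y]
    [MeasurableSpace X] [BorelSpace X] [MeasurableSpace Y] [BorelSpace Y]
    (T : X ≃ₜ X) (S : Y ≃ₜ Y) (π : X → Y)
    (hπc : Continuous π) (hπs : Function.Surjective π)
    (hcomm : π ∘ T = S ∘ π)
    (ν : Measure Y) [IsProbabilityMeasure ν] (hνerg : Ergodic S ν)
    (d : ℕ) (hd : 0 < d) (hfib : ∀ᵐ y ∂ν, (π ⁻¹' {y}).encard = d) :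
    ∃ lam : Measure (Fin d → X), IsProbabilityMeasure lam ∧
      Ergodic (fun x i => T (x i)) lam ∧
      lam {x | (∀ i j, π (x i) = π (x j)) ∧ ∀ i j, i ≠ j → x i ≠ x j} = 1 ∧
      ∀ i : Fin d, lam.map (fun x => π (x i)) = ν := by
  classical
  -- nonemptiness
  haveI hYne : Nonempty Y := by
    by_contra h
    rw [not_nonempty_iff] at h
    have h1 : (univ : Set Y) = ∅ := Set.univ_eq_empty_iff.2 h
    have h2 := measure_univ (μ := ν)
    rw [h1, measure_empty] at h2
    exact zero_ne_one h2
  haveI hXne : Nonempty X := by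
    obtain ⟨x, -⟩ := hπs (Classical.arbitrary Y)
    exact ⟨x⟩
  -- the measurable enumeration of fibers
  obtain ⟨F, hFm, hFae⟩ := exists_enum hπc ν hfib
  -- the finite permutation group with uniform measure
  set P := Equiv.Perm (Fin d) with hP
  letI : MeasurableSpace P := ⊤
  haveI : MeasurableSingletonClass P := ⟨fun _ => trivial⟩
  set D : ℝ≥0∞ := (Nat.factorial d : ℝ≥0∞) with hD
  have hDne : D ≠ 0 := by
    simp [hD, Nat.factorial_ne_zero]
  have hDnt : D ≠ ⊤ := by simp [hD]
  set uP : Measure P := D⁻¹ • Measure.count with huP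
  have huPapp : ∀ B : Set P, uP B = D⁻¹ * Measure.count B := by
    intro B; simp [huP]
  haveI huPprob : IsProbabilityMeasure uP := by
    constructor
    rw [huPapp, Measure.count_univ]
    have : (Fintype.card P : ℝ≥0∞) = D := by
      rw [hD]; norm_cast
      simp [hP, Fintype.card_perm]
    rw [ENat.card_eq_coe_fintype_card, ENat.toENNReal_coe, this]
    exact ENNReal.inv_mul_cancel hDne hDnt
  have huPinv : ∀ (g : P) (B : Set P), uP ((fun τ => g * τ) ⁻¹' B) = uP B := by
    intro g B
    rw [huPapp, huPapp, count_preimage_mul_left]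
  have huPzero : ∀ B : Set P, uP B = 0 → B = ∅ := by
    intro B hB
    rw [huPapp] at hB
    rcases mul_eq_zero.1 hB with h | h
    · exact absurd h (by simp [hDnt])
    · exact Measure.count_eq_zero_iff.1 h
  have huPle : ∀ B : Set P, ∃ j : ℕ, j ≤ Nat.factorial d ∧ uP B = (j : ℝ≥0∞) / D := by
    intro B
    refine ⟨(Set.toFinite B).toFinset.card, ?_, ?_⟩
    · calc (Set.toFinite B).toFinset.card ≤ Fintype.card P := Finset.card_le_univ _
      _ = Nat.factorial d := by simp [hP, Fintype.card_perm]
    · rw [huPapp, Measure.count_apply_finite _ (Set.toFinite B), ENNReal.div_eq_inv_mul]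
  -- the matching cocycle
  have hσ : ∃ σperm : Y → P, Measurable σperm ∧
      ∀ y : Y, ((∀ i, π (F y i) = y) ∧ Function.Injective (F y) ∧
          Set.range (F y) = π ⁻¹' {y}) →
        ((∀ i, π (F (S y) i) = S y) ∧ Function.Injective (F (S y)) ∧
          Set.range (F (S y)) = π ⁻¹' {S y}) →
        ∀ i, F (S y) (σperm y i) = T (F y i) := by
    set M : Y → Fin d → Fin d → Bool :=
      fun y i j => if F (S y) j = T (F y i) then true else false with hM
    have hMm : Measurable M := by
      apply measurable_pi_lambda
      intro i
      apply measurable_pi_lambda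
      intro j
      have hset : MeasurableSet {y : Y | F (S y) j = T (F y i)} :=
        measurableSet_eq_fun'' (hFm.eval.comp S.continuous.measurable)
          (T.continuous.measurable.comp hFm.eval)
      exact Measurable.ite hset measurable_const measurable_const
    set G : (Fin d → Fin d → Bool) → (Fin d → Fin d) :=
      fun M0 i => if h : ∃ j, M0 i j = true then h.choose else i with hG
    set σf : Y → Fin d → Fin d := fun y => G (M y) with hσf
    have hσfm : Measurable σf := (measurable_of_countable G).comp hMm
    set H : (Fin d → Fin d) → Equiv.Perm (Fin d) :=
      fun f => if h : Function.Bijective f then Equiv.ofBijective f h else 1 with hH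
    refine ⟨fun y => H (σf y), (measurable_of_countable H).comp hσfm, ?_⟩
    intro y hy hy' i
    -- matching property of σf
    have hmatch : ∀ i', F (S y) (σf y i') = T (F y i') := by
      intro i'
      have hTin : T (F y i') ∈ Set.range (F (S y)) := by
        rw [hy'.2.2]
        have h1 : π (T (F y i')) = S (π (F y i')) := congr_fun hcomm (F y i')
        rw [Set.mem_preimage, Set.mem_singleton_iff, h1, hy.1 i']
      obtain ⟨j, hj⟩ := hTin
      have hex : ∃ j', M y i' j' = true := by
        refine ⟨j, ?_⟩
        rw [hM]
        simp only [if_pos hj]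
      have hval : M y i' (σf y i') = true := by
        rw [hσf]
        simp only [hG, dif_pos hex]
        exact hex.choose_spec
      rw [hM] at hval
      by_contra hne
      simp only [if_neg hne] at hval
      exact Bool.false_ne_true hval
    have hinj : Function.Injective (σf y) := by
      intro i1 i2 h12
      have h1 := hmatch i1
      have h2 := hmatch i2
      rw [h12, h2] at h1
      exact (hy.2.1 (T.injective h1)).symm
    have hbij : Function.Bijective (σf y) := (Finite.injective_iff_bijective).1 hinj
    have hHval : H (σf y) = Equiv.ofBijective (σf y) hbij := by
      rw [hH]
      simp only [dif_pos hbij]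
    show F (S y) (H (σf y) i) = T (F y i)
    rw [hHval]
    simp only [Equiv.ofBijective_apply]
    exact hmatch i
  obtain ⟨σperm, hσm, hσprop⟩ := hσ
  -- the skew product
  set R : Y × P → Y × P := fun z => (S z.1, σperm z.1 * z.2) with hR
  have hRm : Measurable R := by
    refine Measurable.prodMk (S.continuous.measurable.comp measurable_fst) ?_
    refine measurable_from_prod_countable_left (fun τ => ?_)
    show Measurable fun y : Y => σperm y * τ
    exact (measurable_of_countable (fun g : P => g * τ)).comp hσm
  set mZ : Measure (Y × P) := ν.prod uP with hmZ
  haveI : IsProbabilityMeasure mZ := by rw [hmZ]; infer_instance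
  -- measure preservation of the skew product
  have hMP : MeasurePreserving R mZ mZ := by
    refine ⟨hRm, ?_⟩
    apply Measure.ext
    intro B hB
    rw [Measure.map_apply hRm hB, hmZ, Measure.prod_apply (hRm hB), Measure.prod_apply hB]
    have hsec : ∀ y : Y, (Prod.mk y ⁻¹' (R ⁻¹' B)) =
        (fun τ => σperm y * τ) ⁻¹' (Prod.mk (S y) ⁻¹' B) := by
      intro y
      ext τ
      simp [hR]
    have hmf : Measurable fun y : Y => uP (Prod.mk y ⁻¹' B) :=
      measurable_measure_prodMk_left hB
    calc ∫⁻ y, uP (Prod.mk y ⁻¹' (R ⁻¹' B)) ∂ν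
        = ∫⁻ y, uP (Prod.mk (S y) ⁻¹' B) ∂ν := by
          apply lintegral_congr
          intro y
          rw [hsec y, huPinv]
      _ = ∫⁻ y, uP (Prod.mk y ⁻¹' B) ∂ν := by
          have h1 := lintegral_map (μ := ν) hmf S.continuous.measurable
          rw [hνerg.toMeasurePreserving.map_eq] at h1
          exact h1.symm
  -- stage (i): a.e.-invariant sets have measure j/d! and a.e. constant fiber count
  have hone : ∀ A : Set (Y × P), MeasurableSet A → A =ᵐ[mZ] R ⁻¹' A →
      ∃ j : ℕ, j ≤ Nat.factorial d ∧ mZ A = (j : ℝ≥0∞) / D ∧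
        (fun y => uP (Prod.mk y ⁻¹' A)) =ᵐ[ν] (fun _ => (j : ℝ≥0∞) / D) := by
    intro A hAm' hAinv'
    set φ : Y → ℝ≥0∞ := fun y => uP (Prod.mk y ⁻¹' A) with hφ
    have hφm : Measurable φ := measurable_measure_prodMk_left hAm'
    have hdiff1 : mZ (A \ R ⁻¹' A) = 0 := (ae_eq_set.1 hAinv').1
    have hdiff2 : mZ (R ⁻¹' A \ A) = 0 := (ae_eq_set.1 hAinv').2
    have hsece : ∀ᵐ y ∂ν, Prod.mk y ⁻¹' A = Prod.mk y ⁻¹' (R ⁻¹' A) := by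
      have h1 : ∫⁻ y, uP (Prod.mk y ⁻¹' (A \ R ⁻¹' A)) ∂ν = 0 := by
        rw [← Measure.prod_apply (hAm'.diff (hRm hAm')), ← hmZ, hdiff1]
      have h2 : ∫⁻ y, uP (Prod.mk y ⁻¹' (R ⁻¹' A \ A)) ∂ν = 0 := by
        rw [← Measure.prod_apply ((hRm hAm').diff hAm'), ← hmZ, hdiff2]
      have h1' : ∀ᵐ y ∂ν, uP (Prod.mk y ⁻¹' (A \ R ⁻¹' A)) = 0 :=
        (lintegral_eq_zero_iff
          (measurable_measure_prodMk_left (hAm'.diff (hRm hAm')))).1 h1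
      have h2' : ∀ᵐ y ∂ν, uP (Prod.mk y ⁻¹' (R ⁻¹' A \ A)) = 0 :=
        (lintegral_eq_zero_iff
          (measurable_measure_prodMk_left ((hRm hAm').diff hAm'))).1 h2
      filter_upwards [h1', h2'] with y hy1 hy2
      have e1 : Prod.mk y ⁻¹' (A \ R ⁻¹' A) = ∅ := huPzero _ hy1
      have e2 : Prod.mk y ⁻¹' (R ⁻¹' A \ A) = ∅ := huPzero _ hy2
      rw [Set.preimage_diff] at e1 e2
      exact subset_antisymm (Set.diff_eq_empty.1 e1) (Set.diff_eq_empty.1 e2)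
    have hφinv : ∀ᵐ y ∂ν, φ y = φ (S y) := by
      filter_upwards [hsece] with y hy
      have hre : Prod.mk y ⁻¹' (R ⁻¹' A) =
          (fun τ => σperm y * τ) ⁻¹' (Prod.mk (S y) ⁻¹' A) := by
        ext τ
        simp [hR]
      calc φ y = uP (Prod.mk y ⁻¹' A) := rfl
        _ = uP (Prod.mk y ⁻¹' (R ⁻¹' A)) := by rw [hy]
        _ = uP ((fun τ => σperm y * τ) ⁻¹' (Prod.mk (S y) ⁻¹' A)) := by rw [hre]
        _ = uP (Prod.mk (S y) ⁻¹' A) := huPinv _ _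
        _ = φ (S y) := rfl
    have hlevel : ∀ j : ℕ, ν {y | φ y = (j : ℝ≥0∞)/D} = 0 ∨ ν {y | φ y = (j : ℝ≥0∞)/D} = 1 := by
      intro j
      have hEm : MeasurableSet {y | φ y = (j : ℝ≥0∞)/D} := hφm (measurableSet_singleton _)
      have hEinv : {y | φ y = (j : ℝ≥0∞)/D} =ᵐ[ν] ⇑S ⁻¹' {y | φ y = (j : ℝ≥0∞)/D} := by
        rw [Filter.eventuallyEq_set]
        filter_upwards [hφinv] with y hy
        simp only [Set.mem_setOf_eq, Set.mem_preimage]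
        rw [hy]
      rcases hνerg.quasiErgodic.ae_empty_or_univ₀ hEm.nullMeasurableSet hEinv.symm with h | h
      · left
        exact ae_eq_empty.1 h
      · right
        rw [← measure_univ (μ := ν)]
        exact measure_congr h
    have hexj : ∃ j, j ≤ Nat.factorial d ∧ ν {y | φ y = (j : ℝ≥0∞)/D} = 1 := by
      by_contra hcon
      push_neg at hcon
      have hall : ∀ j, j ≤ Nat.factorial d → ν {y | φ y = (j : ℝ≥0∞)/D} = 0 := fun j hj =>
        (hlevel j).resolve_right (hcon j hj)
      have huniv : (univ : Set Y) ⊆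
          ⋃ j ∈ Finset.range (Nat.factorial d + 1), {y | φ y = (j : ℝ≥0∞)/D} := by
        intro y _
        obtain ⟨j, hj1, hj2⟩ := huPle (Prod.mk y ⁻¹' A)
        exact Set.mem_biUnion (Finset.mem_range.2 (Nat.lt_succ_of_le hj1)) hj2
      have hz : ν (univ : Set Y) = 0 := by
        apply measure_mono_null huniv
        apply (measure_biUnion_null_iff (Finset.range (Nat.factorial d + 1)).countable_toSet).2
        intro j hj
        exact hall j (Nat.lt_succ_iff.1 (Finset.mem_range.1 hj))
      rw [measure_univ] at hz
      exact one_ne_zero hz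
    obtain ⟨j, hjle, hj1⟩ := hexj
    have haeconst : (fun y => uP (Prod.mk y ⁻¹' A)) =ᵐ[ν] (fun _ => (j : ℝ≥0∞)/D) := by
      have hEm : MeasurableSet {y | φ y = (j : ℝ≥0∞)/D} := hφm (measurableSet_singleton _)
      have : ν ({y | φ y = (j : ℝ≥0∞)/D}ᶜ) = 0 := (prob_compl_eq_zero_iff hEm).2 hj1
      rw [Filter.EventuallyEq, ae_iff]
      apply measure_mono_null _ this
      intro y hy
      exact hy
    refine ⟨j, hjle, ?_, haeconst⟩
    rw [hmZ, Measure.prod_apply hAm', lintegral_congr_ae haeconst, lintegral_const,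
      measure_univ, mul_one]
  -- stage (ii): minimal invariant set
  have hex : ∃ j : ℕ, 0 < j ∧ ∃ A : Set (Y × P), MeasurableSet A ∧ (A =ᵐ[mZ] R ⁻¹' A) ∧
      mZ A = (j : ℝ≥0∞) / D ∧
      (fun y => uP (Prod.mk y ⁻¹' A)) =ᵐ[ν] (fun _ => (j : ℝ≥0∞) / D) := by
    refine ⟨Nat.factorial d, Nat.factorial_pos d, univ, MeasurableSet.univ, ?_, ?_, ?_⟩
    · simp
    · rw [measure_univ, ENNReal.div_self hDne hDnt]
    · have : ∀ y : Y, uP (Prod.mk y ⁻¹' (univ : Set (Y × P))) = (Nat.factorial d : ℝ≥0∞) / D := by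
        intro y
        rw [Set.preimage_univ, measure_univ, ENNReal.div_self hDne hDnt]
      filter_upwards with y using this y
  set jstar : ℕ := Nat.find hex with hjstar
  obtain ⟨hjpos, Astar, hAm, hAinv, hAmeas, hAconst⟩ := Nat.find_spec hex
  have hjmin : ∀ j : ℕ, 0 < j → (∃ A : Set (Y × P), MeasurableSet A ∧ (A =ᵐ[mZ] R ⁻¹' A) ∧
      mZ A = (j : ℝ≥0∞) / D ∧
      (fun y => uP (Prod.mk y ⁻¹' A)) =ᵐ[ν] (fun _ => (j : ℝ≥0∞) / D)) → jstar ≤ j :=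
    fun j hj hA => Nat.find_le ⟨hj, hA⟩
  have hAne0 : mZ Astar ≠ 0 := by
    rw [hAmeas]
    simp only [ne_eq, ENNReal.div_eq_zero_iff]
    push_neg
    exact ⟨by exact_mod_cast hjpos.ne', hDnt⟩
  have hAnetop : mZ Astar ≠ ⊤ := (measure_lt_top mZ Astar).ne
  set lamZ : Measure (Y × P) := (mZ Astar)⁻¹ • mZ.restrict Astar with hlamZ
  have hlamZapp : ∀ B : Set (Y × P), MeasurableSet B → lamZ B = (mZ Astar)⁻¹ * mZ (B ∩ Astar) := by
    intro B hB
    rw [hlamZ]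
    simp [Measure.restrict_apply hB]
  haveI hlamZprob : IsProbabilityMeasure lamZ := by
    constructor
    rw [hlamZapp univ MeasurableSet.univ, Set.univ_inter]
    exact ENNReal.inv_mul_cancel hAne0 hAnetop
  -- the zero-one law for lamZ
  have hlamZnull : ∀ s : Set (Y × P), MeasurableSet s → (lamZ s = 0 ↔ mZ (s ∩ Astar) = 0) := by
    intro s hs
    rw [hlamZapp _ hs]
    constructor
    · intro h
      rcases mul_eq_zero.1 h with h' | h'
      · exact absurd h' (ENNReal.inv_ne_zero.2 hAnetop)
      · exact h'
    · intro h
      rw [h, mul_zero]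
  have hQE : ∀ t : Set (Y × P), MeasurableSet t → t =ᵐ[lamZ] R ⁻¹' t →
      lamZ t = 0 ∨ lamZ t = 1 := by
    intro t ht hinv
    have hd1 : lamZ (t \ R ⁻¹' t) = 0 := (ae_eq_set.1 hinv).1
    have hd2 : lamZ (R ⁻¹' t \ t) = 0 := (ae_eq_set.1 hinv).2
    have hd1' : mZ ((t \ R ⁻¹' t) ∩ Astar) = 0 :=
      (hlamZnull _ (ht.diff (hRm ht))).1 hd1
    have hd2' : mZ ((R ⁻¹' t \ t) ∩ Astar) = 0 :=
      (hlamZnull _ ((hRm ht).diff ht)).1 hd2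
    have hAd1 : mZ (Astar \ R ⁻¹' Astar) = 0 := (ae_eq_set.1 hAinv).1
    have hAd2 : mZ (R ⁻¹' Astar \ Astar) = 0 := (ae_eq_set.1 hAinv).2
    have key : (t ∩ Astar : Set (Y × P)) =ᵐ[mZ] R ⁻¹' (t ∩ Astar) := by
      rw [ae_eq_set]
      constructor
      · refine measure_mono_null (t := ((t \ R ⁻¹' t) ∩ Astar) ∪ (Astar \ R ⁻¹' Astar)) ?_
          (measure_union_null hd1' hAd1)
        · rintro z ⟨⟨hz1, hz2⟩, hz3⟩
          rw [Set.preimage_inter, Set.mem_inter_iff, not_and_or] at hz3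
          rcases hz3 with hz3 | hz3
          · exact Or.inl ⟨⟨hz1, hz3⟩, hz2⟩
          · exact Or.inr ⟨hz2, hz3⟩
      · refine measure_mono_null (t := ((R ⁻¹' t \ t) ∩ Astar) ∪ (R ⁻¹' Astar \ Astar)) ?_
          (measure_union_null hd2' hAd2)
        · rintro z ⟨hz1, hz3⟩
          rw [Set.preimage_inter, Set.mem_inter_iff] at hz1
          rw [Set.mem_inter_iff, not_and_or] at hz3
          by_cases hzA : z ∈ Astar
          · rcases hz3 with hz3 | hz3
            · exact Or.inl ⟨⟨hz1.1, hz3⟩, hzA⟩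
            · exact absurd hzA hz3
          · exact Or.inr ⟨hz1.2, hzA⟩
    obtain ⟨j, hjle, hjval, hjconst⟩ := hone (t ∩ Astar) (ht.inter hAm) key
    by_cases hj0 : j = 0
    · left
      rw [hlamZapp _ ht, hjval, hj0]
      simp
    · right
      have hjJ : jstar ≤ j := hjmin j (Nat.pos_of_ne_zero hj0) ⟨t ∩ Astar,
        ht.inter hAm, key, hjval, hjconst⟩
      have hle1 : mZ (t ∩ Astar) ≤ mZ Astar := measure_mono Set.inter_subset_right
      have hge : mZ Astar ≤ mZ (t ∩ Astar) := by
        rw [hAmeas, hjval]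
        exact ENNReal.div_le_div_right (by exact_mod_cast hjJ) D
      rw [hlamZapp _ ht, le_antisymm hle1 hge]
      exact ENNReal.inv_mul_cancel hAne0 hAnetop
  -- lamZ is R-invariant
  have hMPlam : MeasurePreserving R lamZ lamZ := by
    refine ⟨hRm, ?_⟩
    apply Measure.ext
    intro B hB
    rw [Measure.map_apply hRm hB, hlamZapp _ (hRm hB), hlamZapp _ hB]
    congr 1
    calc mZ (R ⁻¹' B ∩ Astar) = mZ (R ⁻¹' B ∩ R ⁻¹' Astar) :=
          measure_congr ((Filter.EventuallyEq.refl (ae mZ) (R ⁻¹' B)).inter hAinv)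
      _ = mZ (R ⁻¹' (B ∩ Astar)) := by rw [Set.preimage_inter]
      _ = mZ (B ∩ Astar) := hMP.measure_preimage (hB.inter hAm).nullMeasurableSet
  -- first marginal of lamZ is ν
  have hmarg : lamZ.map Prod.fst = ν := by
    apply Measure.ext
    intro B hB
    rw [Measure.map_apply measurable_fst hB, hlamZapp _ (measurable_fst hB)]
    have hsec : ∀ y : Y, (Prod.mk y ⁻¹' (Prod.fst ⁻¹' B ∩ Astar)) =
        if y ∈ B then Prod.mk y ⁻¹' Astar else ∅ := by
      intro y
      by_cases hy : y ∈ B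
      · simp only [hy, if_true]
        ext τ
        simp [hy]
      · simp only [hy, if_false]
        ext τ
        simp [hy]
    have hprod : mZ (Prod.fst ⁻¹' B ∩ Astar) =
        ∫⁻ y, uP (Prod.mk y ⁻¹' (Prod.fst ⁻¹' B ∩ Astar)) ∂ν := by
      rw [hmZ]
      exact Measure.prod_apply ((measurable_fst hB).inter hAm)
    rw [hprod]
    have hstep1 : ∫⁻ y, uP (Prod.mk y ⁻¹' (Prod.fst ⁻¹' B ∩ Astar)) ∂ν
        = ∫⁻ y in B, uP (Prod.mk y ⁻¹' Astar) ∂ν := by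
      rw [← lintegral_indicator hB]
      apply lintegral_congr
      intro y
      rw [hsec y]
      by_cases hy : y ∈ B <;> simp [hy]
    have hstep2 : ∫⁻ y in B, uP (Prod.mk y ⁻¹' Astar) ∂ν
        = ∫⁻ (_ : Y) in B, ((jstar : ℝ≥0∞) / D) ∂ν :=
      lintegral_congr_ae (Filter.EventuallyEq.restrict hAconst)
    rw [hstep1, hstep2, setLIntegral_const, ← hAmeas, ← mul_assoc,
      ENNReal.inv_mul_cancel hAne0 hAnetop, one_mul]
  -- the map to X^d
  set Ψ : Y × P → (Fin d → X) := fun z i => F z.1 (z.2 i) with hΨ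
  have hΨm : Measurable Ψ := by
    apply measurable_pi_lambda
    intro i
    refine measurable_from_prod_countable_left (fun τ => ?_)
    show Measurable fun y : Y => F y (τ i)
    exact hFm.eval
  -- the good set in Y
  set Ygood : Y → Prop := fun y => ((∀ i, π (F y i) = y) ∧ Function.Injective (F y) ∧
      Set.range (F y) = π ⁻¹' {y}) ∧
      ((∀ i, π (F (S y) i) = S y) ∧ Function.Injective (F (S y)) ∧
      Set.range (F (S y)) = π ⁻¹' {S y}) with hYgood
  have hYgoodae : ∀ᵐ y ∂ν, Ygood y := by
    have h2 : ∀ᵐ y ∂ν, ((∀ i, π (F (S y) i) = S y) ∧ Function.Injective (F (S y)) ∧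
        Set.range (F (S y)) = π ⁻¹' {S y}) :=
      hνerg.toMeasurePreserving.quasiMeasurePreserving.ae hFae
    filter_upwards [hFae, h2] with y h1 h2 using ⟨h1, h2⟩
  have hlamZae : ∀ᵐ z ∂lamZ, Ygood z.1 := by
    rw [← hmarg] at hYgoodae
    exact ae_of_ae_map (measurable_fst.aemeasurable) hYgoodae
  -- the a.e. semiconjugacy
  have hsemi : ∀ᵐ z ∂lamZ, Ψ (R z) = (fun i => T (Ψ z i)) := by
    filter_upwards [hlamZae] with z hz
    funext i
    have := hσprop z.1 hz.1 hz.2 (z.2 i)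
    simp only [hΨ, hR, Equiv.Perm.mul_apply]
    exact this
  set lam : Measure (Fin d → X) := lamZ.map Ψ with hlam
  set Td : (Fin d → X) → (Fin d → X) := fun x i => T (x i) with hTd
  have hTdm : Measurable Td := by
    apply measurable_pi_lambda
    intro i
    exact T.continuous.measurable.comp (measurable_pi_apply i)
  haveI hlamprob : IsProbabilityMeasure lam := Measure.isProbabilityMeasure_map hΨm.aemeasurable
  -- key: preimages commute a.e.
  have hcomm2 : ∀ B : Set (Fin d → X), MeasurableSet B →
      (Ψ ⁻¹' (Td ⁻¹' B) : Set (Y × P)) =ᵐ[lamZ] (R ⁻¹' (Ψ ⁻¹' B) : Set (Y × P)) := by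
    intro B hB
    rw [Filter.eventuallyEq_set]
    filter_upwards [hsemi] with z hz
    simp only [Set.mem_preimage]
    rw [show Td (Ψ z) = Ψ (R z) from hz.symm]
  have hMPfinal : MeasurePreserving Td lam lam := by
    refine ⟨hTdm, ?_⟩
    apply Measure.ext
    intro B hB
    rw [Measure.map_apply hTdm hB, hlam, Measure.map_apply hΨm (hTdm hB),
      Measure.map_apply hΨm hB]
    rw [measure_congr (hcomm2 B hB)]
    exact hMPlam.measure_preimage (hΨm hB).nullMeasurableSet
  have hErg : Ergodic Td lam := by
    refine ⟨hMPfinal, ⟨fun s hs hinv => ?_⟩⟩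
    have ht : (Ψ ⁻¹' s : Set (Y × P)) =ᵐ[lamZ] R ⁻¹' (Ψ ⁻¹' s) := by
      have := hcomm2 s hs
      rwa [hinv] at this
    rcases hQE (Ψ ⁻¹' s) (hΨm hs) ht with h | h
    · rw [Filter.eventuallyConst_set']
      left
      rw [ae_eq_empty, hlam, Measure.map_apply hΨm hs]
      exact h
    · rw [Filter.eventuallyConst_set']
      right
      rw [ae_eq_univ]
      have h1 : lam s = 1 := by rw [hlam, Measure.map_apply hΨm hs]; exact h
      have := prob_compl_eq_zero_iff (μ := lam) hs
      exact this.2 h1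
  -- good set has measure 1
  have hgoodXm : MeasurableSet {x : Fin d → X |
      (∀ i j, π (x i) = π (x j)) ∧ ∀ i j, i ≠ j → x i ≠ x j} := by
    have heqm : ∀ i j : Fin d, MeasurableSet {x : Fin d → X | x i = x j} := fun i j =>
      measurableSet_eq_fun'' (measurable_pi_apply i) (measurable_pi_apply j)
    have h1 : MeasurableSet {x : Fin d → X | ∀ i j, π (x i) = π (x j)} := by
      have : {x : Fin d → X | ∀ i j, π (x i) = π (x j)} =
          ⋂ i, ⋂ j, {x : Fin d → X | π (x i) = π (x j)} := by
        ext x; simp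
      rw [this]
      exact MeasurableSet.iInter fun i => MeasurableSet.iInter fun j =>
        measurableSet_eq_fun'' (hπc.measurable.comp (measurable_pi_apply i))
          (hπc.measurable.comp (measurable_pi_apply j))
    have h2 : MeasurableSet {x : Fin d → X | ∀ i j, i ≠ j → x i ≠ x j} := by
      have : {x : Fin d → X | ∀ i j, i ≠ j → x i ≠ x j} =
          ⋂ i, ⋂ j, ⋂ (_ : i ≠ j), {x : Fin d → X | x i = x j}ᶜ := by
        ext x; simp [Set.mem_iInter]
      rw [this]
      exact MeasurableSet.iInter fun i => MeasurableSet.iInter fun j =>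
        MeasurableSet.iInter fun _ => (heqm i j).compl
    exact h1.inter h2
  have hgood1 : lam {x : Fin d → X |
      (∀ i j, π (x i) = π (x j)) ∧ ∀ i j, i ≠ j → x i ≠ x j} = 1 := by
    have hae : ∀ᵐ z ∂lamZ, Ψ z ∈ {x : Fin d → X |
        (∀ i j, π (x i) = π (x j)) ∧ ∀ i j, i ≠ j → x i ≠ x j} := by
      filter_upwards [hlamZae] with z hz
      obtain ⟨⟨hπF, hinj, hrange⟩, -⟩ := hz
      constructor
      · intro i j
        rw [hπF (z.2 i), hπF (z.2 j)]
      · intro i j hij hcon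
        exact hij (z.2.injective (hinj hcon))
    rw [hlam, Measure.map_apply hΨm hgoodXm]
    have hc : lamZ ((Ψ ⁻¹' {x : Fin d → X |
        (∀ i j, π (x i) = π (x j)) ∧ ∀ i j, i ≠ j → x i ≠ x j})ᶜ) = 0 := by
      rw [← Set.preimage_compl]
      exact hae
    have := prob_compl_eq_zero_iff (μ := lamZ) (hΨm hgoodXm)
    exact this.1 hc
  -- marginals
  have hmargfinal : ∀ i : Fin d, lam.map (fun x => π (x i)) = ν := by
    intro i
    have hm1 : Measurable fun x : Fin d → X => π (x i) :=
      hπc.measurable.comp (measurable_pi_apply i)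
    rw [hlam, Measure.map_map hm1 hΨm]
    have hae : ((fun x : Fin d → X => π (x i)) ∘ Ψ) =ᵐ[lamZ] Prod.fst := by
      filter_upwards [hlamZae] with z hz
      obtain ⟨⟨hπF, -, -⟩, -⟩ := hz
      exact hπF (z.2 i)
    rw [Measure.map_congr hae, hmarg]
  exact ⟨lam, hlamprob, hErg, hgood1, hmargfinal⟩
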